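/- Every subgame perfect equilibrium is a Nash equilibrium: for every strategy profile s, SPE(s) implies Nash(s). -/

import Mathlib

/-- The two agents of the game. -/
inductive Agent : Type
  | A
  | B

/-- The two choices: down and right. -/
inductive Choice : Type
  | d
  | r

/-- Payoff assignments for the agents. -/
abbrev Payoffs : Type := Agent → ℝ

/-! ### Strategy profiles: final coalgebra of `X ↦ ℝ^P + P × Choice × X × X` -/

def StratProfF : PFunctor.{0} :=
  ⟨Payoffs ⊕ (Agent × Choice), fun x =>
    match x with
    | Sum.inl _ => Empty
    | Sum.inr _ => Bool⟩

/-- Strategy profiles: the final coalgebra (M-type) of `StratProfF`. -/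
abbrev StratProf : Type := StratProfF.M

/-- Leaf strategy profile `⟨⟨f⟩⟩`. -/
def sleaf (f : Payoffs) : StratProf :=
  PFunctor.M.mk ⟨Sum.inl f, fun (e : Empty) => e.elim⟩

/-- Node strategy profile `⟨⟨p, c, s_d, s_r⟩⟩` (`true` child = down, `false` child = right). -/
def snode (p : Agent) (c : Choice) (sd sr : StratProf) : StratProf :=
  PFunctor.M.mk ⟨Sum.inr (p, c), fun (b : Bool) => if b then sd else sr⟩

/-- Convergence `↓s`: the least predicate closed under the given rules. -/
inductive Conv : StratProf → Prop
  | leaf (f : Payoffs) : Conv (sleaf f)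
  | down (p : Agent) (sd sr : StratProf) : Conv sd → Conv (snode p Choice.d sd sr)
  | right (p : Agent) (sd sr : StratProf) : Conv sr → Conv (snode p Choice.r sd sr)

/-- One step of the strong-convergence condition. -/
def SConvStep (R : StratProf → Prop) (s : StratProf) : Prop :=
  (∃ f, s = sleaf f) ∨
    ∃ p c sd sr, s = snode p c sd sr ∧ Conv s ∧ R sd ∧ R sr

/-- Strong convergence `⇓s`: the largest predicate `R` with `R ≤ SConvStep R`. -/
def SConv (s : StratProf) : Prop :=
  ∃ R : StratProf → Prop, R s ∧ ∀ t, R t → SConvStep R t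

/-- One step of the `□Φ` condition. -/
def BoxStep (Φ : StratProf → Prop) (R : StratProf → Prop) (t : StratProf) : Prop :=
  Φ t ∧ ∀ p c sd sr, t = snode p c sd sr → R sd ∧ R sr

/-- The modality `□Φ`: the largest predicate `R` with `R ≤ BoxStep Φ R`. -/
def Box (Φ : StratProf → Prop) (s : StratProf) : Prop :=
  ∃ R : StratProf → Prop, R s ∧ ∀ t, R t → BoxStep Φ R t

/-- The partial payoff function `ŝ`, as an inductively defined graph relation:
`PayoffRel s f` means "`ŝ` is defined and equals `f`". -/
inductive PayoffRel : StratProf → Payoffs → Prop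
  | leaf (f : Payoffs) : PayoffRel (sleaf f) f
  | down (p : Agent) (sd sr : StratProf) (f : Payoffs) :
      PayoffRel sd f → PayoffRel (snode p Choice.d sd sr) f
  | right (p : Agent) (sd sr : StratProf) (f : Payoffs) :
      PayoffRel sr f → PayoffRel (snode p Choice.r sd sr) f

/-- Bisimilarity `s' ~ s`: the largest relation satisfying the coinductive clauses. -/
def Bisim (s' s : StratProf) : Prop :=
  ∃ R : StratProf → StratProf → Prop, R s' s ∧
    ∀ t' t, R t' t →
      ((∃ f, t' = sleaf f ∧ t = sleaf f) ∨
        ∃ p c td' tr' td tr,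
          t' = snode p c td' tr' ∧ t = snode p c td tr ∧ R td' td ∧ R tr' tr)

/-- The subprofile relation `s' ≼ s`: the least relation closed under the given rules. -/
inductive Subprof : StratProf → StratProf → Prop
  | bisim {s' s : StratProf} : Bisim s' s → Subprof s' s
  | down {s' : StratProf} {p : Agent} {c : Choice} {sd sr : StratProf} :
      Subprof s' sd → Subprof s' (snode p c sd sr)
  | right {s' : StratProf} {p : Agent} {c : Choice} {sd sr : StratProf} :
      Subprof s' sr → Subprof s' (snode p c sd sr)

/-! ### Games: final coalgebra of `X ↦ ℝ^P + P × X × X` -/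

def GameF : PFunctor.{0} :=
  ⟨Payoffs ⊕ Agent, fun x =>
    match x with
    | Sum.inl _ => Empty
    | Sum.inr _ => Bool⟩

/-- Games: the final coalgebra (M-type) of `GameF`. -/
abbrev Game : Type := GameF.M

/-- Leaf game `⟨f⟩`. -/
def gleaf (f : Payoffs) : Game :=
  PFunctor.M.mk ⟨Sum.inl f, fun (e : Empty) => e.elim⟩

/-- Node game `⟨p, g_d, g_r⟩`. -/
def gnode (p : Agent) (gd gr : Game) : Game :=
  PFunctor.M.mk ⟨Sum.inr p, fun (b : Bool) => if b then gd else gr⟩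

/-- The corecursive function `game : StratProf → Game` erasing the choices. -/
def gameOf : StratProf → Game :=
  PFunctor.M.corec (fun s =>
    match PFunctor.M.dest s with
    | ⟨Sum.inl f, _⟩ => ⟨Sum.inl f, fun (e : Empty) => e.elim⟩
    | ⟨Sum.inr pc, k⟩ => ⟨Sum.inr pc.1, k⟩)

/-! ### Strategies: final coalgebra of `X ↦ ℝ^P + (P + Choice) × X × X` -/

def StratF : PFunctor.{0} :=
  ⟨Payoffs ⊕ (Agent ⊕ Choice), fun x =>
    match x with
    | Sum.inl _ => Empty
    | Sum.inr _ => Bool⟩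

/-- Strategies: the final coalgebra (M-type) of `StratF`. -/
abbrev Strat : Type := StratF.M

/-- Leaf strategy `⟨f⟩`. -/
def stleaf (f : Payoffs) : Strat :=
  PFunctor.M.mk ⟨Sum.inl f, fun (e : Empty) => e.elim⟩

/-- Node strategy `⟨x, st₁, st₂⟩` with `x` an agent or a choice. -/
def stnode (x : Agent ⊕ Choice) (s1 s2 : Strat) : Strat :=
  PFunctor.M.mk ⟨Sum.inr x, fun (b : Bool) => if b then s1 else s2⟩

/-- The corecursive function `st2g` replacing choice labels by the given agent. -/
def st2gStep (p : Agent) (t : Strat) : GameF.Obj Strat :=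
  match PFunctor.M.dest t with
  | ⟨Sum.inl f, _⟩ => ⟨Sum.inl f, fun (e : Empty) => e.elim⟩
  | ⟨Sum.inr (Sum.inl q), k⟩ => ⟨Sum.inr q, k⟩
  | ⟨Sum.inr (Sum.inr _), k⟩ => ⟨Sum.inr p, k⟩

/-- The corecursive function `st2g` replacing choice labels by the given agent. -/
def st2g (st : Strat) (p : Agent) : Game :=
  PFunctor.M.corec (st2gStep p) st

/-- `st` is full for `p`: coinductively, the agent `p` occurs nowhere as a label. -/
def Full (p : Agent) (st : Strat) : Prop :=
  ∃ R : Strat → Prop, R st ∧ ∀ t, R t →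
    (∃ f, t = stleaf f) ∨
      ∃ x s1 s2, t = stnode x s1 s2 ∧ x ≠ Sum.inl p ∧ R s1 ∧ R s2

/-- A one-level view of a strategy. -/
inductive StratView : Type
  | leaf (f : Payoffs)
  | node (x : Agent ⊕ Choice) (k : Bool → Strat)

/-- Destruct a strategy into its one-level view. -/
def stratView (t : Strat) : StratView :=
  match PFunctor.M.dest t with
  | ⟨Sum.inl f, _⟩ => StratView.leaf f
  | ⟨Sum.inr x, k⟩ => StratView.node x k

/-- One corecursion step for the sum of the strategy of `A` (first component)
and the strategy of `B` (second component). -/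
def oplusStep : Strat × Strat → StratProfF.Obj (Strat × Strat) := fun q =>
  match stratView q.1, stratView q.2 with
  | StratView.leaf f, _ => ⟨Sum.inl f, fun (e : Empty) => e.elim⟩
  | StratView.node _ _, StratView.leaf f => ⟨Sum.inl f, fun (e : Empty) => e.elim⟩
  | StratView.node (Sum.inr c) k1, StratView.node (Sum.inl p') k2 =>
      ⟨Sum.inr (p', c), fun (b : Bool) => (k1 b, k2 b)⟩
  | StratView.node (Sum.inr c) k1, StratView.node (Sum.inr _) k2 =>
      ⟨Sum.inr (Agent.A, c), fun (b : Bool) => (k1 b, k2 b)⟩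
  | StratView.node (Sum.inl p') k1, StratView.node (Sum.inr c) k2 =>
      ⟨Sum.inr (p', c), fun (b : Bool) => (k1 b, k2 b)⟩
  | StratView.node (Sum.inl p') k1, StratView.node (Sum.inl _) k2 =>
      ⟨Sum.inr (p', Choice.d), fun (b : Bool) => (k1 b, k2 b)⟩

/-- The sum `st_A ⊕ st_B` of the strategies of the two agents. -/
def oplus (stA stB : Strat) : StratProf :=
  PFunctor.M.corec oplusStep (stA, stB)

/-! ### Equilibria -/

/-- The local equilibrium condition `PE`. -/
def PE (s : StratProf) : Prop :=
  SConv s ∧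
    (∀ p sd sr fd fr, s = snode p Choice.d sd sr →
        PayoffRel sd fd → PayoffRel sr fr → fd p ≥ fr p) ∧
    (∀ p sd sr fd fr, s = snode p Choice.r sd sr →
        PayoffRel sd fd → PayoffRel sr fr → fr p ≥ fd p)

/-- Subgame perfect equilibrium: `SPE = □PE`. -/
def SPE : StratProf → Prop := Box PE

/-- Convertibility `s ⊢p⊣ s'`: the inductively defined deviation relation of agent `p`. -/
inductive Convert (p : Agent) : StratProf → StratProf → Prop
  | bisim {s s' : StratProf} : Bisim s s' → Convert p s s'
  | own {c c' : Choice} {s1 s2 s1' s2' : StratProf} :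
      Convert p s1 s1' → Convert p s2 s2' →
      Convert p (snode p c s1 s2) (snode p c' s1' s2')
  | other {p' : Agent} {c : Choice} {s1 s2 s1' s2' : StratProf} :
      Convert p s1 s1' → Convert p s2 s2' →
      Convert p (snode p' c s1 s2) (snode p' c s1' s2')

/-- Nash equilibrium: no agent can improve her payoff by converting
(the inequality being required whenever both payoffs are defined). -/
def Nash (s : StratProf) : Prop :=
  ∀ p s' f f', Convert p s s' → PayoffRel s f → PayoffRel s' f' → f p ≥ f' p

/-! ### The 0,1-game -/

/-- The payoff function `A ↦ 0, B ↦ 1`. -/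
def f01 : Payoffs := fun p => match p with | Agent.A => 0 | Agent.B => 1

/-- The payoff function `A ↦ 1, B ↦ 0`. -/
def f10 : Payoffs := fun p => match p with | Agent.A => 1 | Agent.B => 0

/-- `S01 true = S0` and `S01 false = S1`: the largest pair of predicates
characterizing the strategy profiles of the 0,1-game. -/
def S01 (i : Bool) (s : StratProf) : Prop :=
  ∃ R : Bool → StratProf → Prop, R i s ∧
    (∀ t, R true t → ∃ c s', t = snode Agent.A c (sleaf f01) s' ∧ R false s') ∧
    (∀ t, R false t → ∃ c s', t = snode Agent.B c (sleaf f10) s' ∧ R true s')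

def S0 : StratProf → Prop := S01 true
def S1 : StratProf → Prop := S01 false

/-- One step of the `AcBes` condition. -/
def AcBesStep (R : StratProf → Prop) (s : StratProf) : Prop :=
  ∀ p c f s', s = snode p c (sleaf f) s' →
    (p = Agent.A ∧ f = f01 ∧ c = Choice.r ∧ R s') ∨
    (p = Agent.B ∧ f = f10 ∧ (c = Choice.d ∨ R s'))

/-- `AcBes`: "A continues and B eventually stops", the least predicate `R`
such that `AcBesStep R ≤ R` (impredicative encoding of the least fixed point). -/
def AcBes (s : StratProf) : Prop :=
  ∀ R : StratProf → Prop, (∀ t, AcBesStep R t → R t) → R s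

/-- One step of the `BcAes` condition. -/
def BcAesStep (R : StratProf → Prop) (s : StratProf) : Prop :=
  ∀ p c f s', s = snode p c (sleaf f) s' →
    (p = Agent.B ∧ f = f10 ∧ c = Choice.r ∧ R s') ∨
    (p = Agent.A ∧ f = f01 ∧ (c = Choice.d ∨ R s'))

/-- `BcAes`: "B continues and A eventually stops", symmetric to `AcBes`. -/
def BcAes (s : StratProf) : Prop :=
  ∀ R : StratProf → Prop, (∀ t, BcAesStep R t → R t) → R s

def SAcBes : StratProf → Prop := Box AcBes
def SBcAes : StratProf → Prop := Box BcAes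

/-! ### The 0,1-game `g01`, the escalation strategies and the all-continue profile -/

/-- Corecursion step for `g01` and `g10`:
`inl true ↦ g01`, `inl false ↦ g10`, `inr true ↦ ⟨f01⟩`, `inr false ↦ ⟨f10⟩`. -/
def g01Step : Bool ⊕ Bool → GameF.Obj (Bool ⊕ Bool)
  | Sum.inl true => ⟨Sum.inr Agent.A, fun (b : Bool) => if b then Sum.inr true else Sum.inl false⟩
  | Sum.inl false => ⟨Sum.inr Agent.B, fun (b : Bool) => if b then Sum.inr false else Sum.inl true⟩
  | Sum.inr true => ⟨Sum.inl f01, fun (e : Empty) => e.elim⟩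
  | Sum.inr false => ⟨Sum.inl f10, fun (e : Empty) => e.elim⟩

/-- The 0,1-game: `g01 = ⟨A, ⟨f01⟩, g10⟩` where `g10 = ⟨B, ⟨f10⟩, g01⟩`. -/
def g01 : Game := PFunctor.M.corec g01Step (Sum.inl true)

/-- `g10 = ⟨B, ⟨f10⟩, g01⟩`. -/
def g10 : Game := PFunctor.M.corec g01Step (Sum.inl false)

/-- Corecursion step for `st_{A,∞} = ⟨r, ⟨f01⟩, ⟨B, ⟨f10⟩, st_{A,∞}⟩⟩`. -/
def stAinfStep : ℕ → StratF.Obj ℕ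
  | 0 => ⟨Sum.inr (Sum.inr Choice.r), fun (b : Bool) => if b then 2 else 1⟩
  | 1 => ⟨Sum.inr (Sum.inl Agent.B), fun (b : Bool) => if b then 3 else 0⟩
  | 2 => ⟨Sum.inl f01, fun (e : Empty) => e.elim⟩
  | _ => ⟨Sum.inl f10, fun (e : Empty) => e.elim⟩

/-- The escalation strategy of `A`: `st_{A,∞} = ⟨r, ⟨f01⟩, ⟨B, ⟨f10⟩, st_{A,∞}⟩⟩`. -/
def stAinf : Strat := PFunctor.M.corec stAinfStep 0

/-- Corecursion step for `st_{B,∞} = ⟨A, ⟨f01⟩, ⟨r, ⟨f10⟩, st_{B,∞}⟩⟩`. -/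
def stBinfStep : ℕ → StratF.Obj ℕ
  | 0 => ⟨Sum.inr (Sum.inl Agent.A), fun (b : Bool) => if b then 2 else 1⟩
  | 1 => ⟨Sum.inr (Sum.inr Choice.r), fun (b : Bool) => if b then 3 else 0⟩
  | 2 => ⟨Sum.inl f01, fun (e : Empty) => e.elim⟩
  | _ => ⟨Sum.inl f10, fun (e : Empty) => e.elim⟩

/-- The escalation strategy of `B`: `st_{B,∞} = ⟨A, ⟨f01⟩, ⟨r, ⟨f10⟩, st_{B,∞}⟩⟩`. -/
def stBinf : Strat := PFunctor.M.corec stBinfStep 0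

/-- Corecursion step for the all-continue profile
`s_{A,∞} = ⟨⟨A, r, ⟨⟨f01⟩⟩, s_{B,∞}⟩⟩`, `s_{B,∞} = ⟨⟨B, r, ⟨⟨f10⟩⟩, s_{A,∞}⟩⟩`. -/
def sAinfStep : ℕ → StratProfF.Obj ℕ
  | 0 => ⟨Sum.inr (Agent.A, Choice.r), fun (b : Bool) => if b then 2 else 1⟩
  | 1 => ⟨Sum.inr (Agent.B, Choice.r), fun (b : Bool) => if b then 3 else 0⟩
  | 2 => ⟨Sum.inl f01, fun (e : Empty) => e.elim⟩
  | _ => ⟨Sum.inl f10, fun (e : Empty) => e.elim⟩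

/-- The all-continue profile `s_{A,∞}` of the 0,1-game. -/
def sAinf : StratProf := PFunctor.M.corec sAinfStep 0

/-- The profile `s_{B,∞}`. -/
def sBinf : StratProf := PFunctor.M.corec sAinfStep 1

/-- `s_□r`, the profile of the 0,1-game where both agents continue forever
(it satisfies `s_□r = ⟨⟨A, r, ⟨⟨f01⟩⟩, ⟨⟨B, r, ⟨⟨f10⟩⟩, s_□r⟩⟩⟩⟩`). -/
def sBoxr : StratProf := sAinf

/-- `s_{d□r} = ⟨⟨A, d, ⟨⟨f01⟩⟩, ⟨⟨B, r, ⟨⟨f10⟩⟩, s_□r⟩⟩⟩⟩`. -/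
def sdBoxr : StratProf :=
  snode Agent.A Choice.d (sleaf f01) (snode Agent.B Choice.r (sleaf f10) sBoxr)

/-! ### Finite games and profiles -/

/-- Finite strategy profiles. -/
inductive FinStratProf : Type
  | leaf (f : Payoffs)
  | node (p : Agent) (c : Choice) (sd sr : FinStratProf)

/-- Finite games. -/
inductive FinGame : Type
  | leaf (f : Payoffs)
  | node (p : Agent) (gd gr : FinGame)

/-- The (total) payoff function of a finite strategy profile. -/
def fpayoff : FinStratProf → Payoffs
  | FinStratProf.leaf f => f
  | FinStratProf.node _ Choice.d sd _ => fpayoff sd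
  | FinStratProf.node _ Choice.r _ sr => fpayoff sr

/-- The game of a finite strategy profile (erasing the choices). -/
def fgame : FinStratProf → FinGame
  | FinStratProf.leaf f => FinGame.leaf f
  | FinStratProf.node p _ sd sr => FinGame.node p (fgame sd) (fgame sr)

/-- Backward induction for finite strategy profiles. -/
inductive BI : FinStratProf → Prop
  | leaf (f : Payoffs) : BI (FinStratProf.leaf f)
  | node (p : Agent) (c : Choice) (sd sr : FinStratProf) :
      BI sd → BI sr →
      (c = Choice.d → fpayoff sd p ≥ fpayoff sr p) →
      (c = Choice.r → fpayoff sr p ≥ fpayoff sd p) →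
      BI (FinStratProf.node p c sd sr)

/-- The family `F01` of finite truncations of the 0,1-game (cut after `B`). -/
inductive F01 : FinGame → Prop
  | base : F01 (FinGame.leaf f01)
  | step (g : FinGame) : F01 g →
      F01 (FinGame.node Agent.A (FinGame.leaf f01) (FinGame.node Agent.B (FinGame.leaf f10) g))

/-- `SF01`: agent B always continues, agent A does whatever she likes. -/
inductive SF01 : FinStratProf → Prop
  | base : SF01 (FinStratProf.leaf f01)
  | step (c : Choice) (s' : FinStratProf) : SF01 s' →
      SF01 (FinStratProf.node Agent.A c (FinStratProf.leaf f01)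
        (FinStratProf.node Agent.B Choice.r (FinStratProf.leaf f10) s'))

mutual
  /-- The family `K01` of finite truncations of the 0,1-game (cut after `A`). -/
  inductive K01 : FinGame → Prop
    | step (g : FinGame) : K01' g → K01 (FinGame.node Agent.A (FinGame.leaf f01) g)
  /-- The auxiliary family `K01'`. -/
  inductive K01' : FinGame → Prop
    | base : K01' (FinGame.leaf f10)
    | step (g : FinGame) : K01 g → K01' (FinGame.node Agent.B (FinGame.leaf f10) g)
end

mutual
  /-- `SK01`: agent A always continues, agent B does whatever she likes. -/
  inductive SK01 : FinStratProf → Prop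
    | step (s' : FinStratProf) : SK01' s' →
        SK01 (FinStratProf.node Agent.A Choice.r (FinStratProf.leaf f01) s')
  /-- The auxiliary predicate `SK01'`. -/
  inductive SK01' : FinStratProf → Prop
    | base : SK01' (FinStratProf.leaf f10)
    | step (c : Choice) (s' : FinStratProf) : SK01 s' →
        SK01' (FinStratProf.node Agent.B c (FinStratProf.leaf f10) s')
end

/-! ### Auxiliary lemmas for Statement 12 -/

lemma sleaf_ne_snode (f : Payoffs) (p : Agent) (c : Choice) (sd sr : StratProf) :
    sleaf f ≠ snode p c sd sr := by
  intro h
  have h2 := congrArg PFunctor.M.dest h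
  simp only [sleaf, snode, PFunctor.M.dest_mk] at h2
  have := congrArg Sigma.fst h2
  cases this

lemma sleaf_inj {f g : Payoffs} (h : sleaf f = sleaf g) : f = g := by
  have h2 := congrArg PFunctor.M.dest h
  simp only [sleaf, PFunctor.M.dest_mk] at h2
  exact Sum.inl.inj (congrArg Sigma.fst h2)

lemma snode_inj {p p' : Agent} {c c' : Choice} {sd sr sd' sr' : StratProf}
    (h : snode p c sd sr = snode p' c' sd' sr') :
    p = p' ∧ c = c' ∧ sd = sd' ∧ sr = sr' := by
  have h2 := congrArg PFunctor.M.dest h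
  simp only [snode, PFunctor.M.dest_mk] at h2
  have hfst := Sum.inr.inj (congrArg Sigma.fst h2)
  have hp : p = p' := congrArg Prod.fst hfst
  have hc : c = c' := congrArg Prod.snd hfst
  subst hp; subst hc
  have hk : HEq (fun (b : Bool) => if b then sd else sr)
      (fun (b : Bool) => if b then sd' else sr') := by
    exact (Sigma.mk.inj_iff.mp h2).2
  have hk' := eq_of_heq hk
  refine ⟨rfl, rfl, ?_, ?_⟩
  · simpa using congrFun hk' true
  · simpa using congrFun hk' false

lemma payoffRel_node {s : StratProf} {f : Payoffs} (h : PayoffRel s f) :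
    ∀ p c sd sr, s = snode p c sd sr →
      (c = Choice.d → PayoffRel sd f) ∧ (c = Choice.r → PayoffRel sr f) := by
  cases h with
  | leaf =>
      intro p c sd sr he
      exact absurd he (sleaf_ne_snode f p c sd sr)
  | down p' sd' sr' g hg =>
      intro p c sd sr he
      obtain ⟨hp, hc, h1, h2⟩ := snode_inj he
      refine ⟨fun _ => ?_, fun hcr => ?_⟩
      · rw [← h1]; exact hg
      · rw [← hc] at hcr; cases hcr
  | right p' sd' sr' g hg =>
      intro p c sd sr he
      obtain ⟨hp, hc, h1, h2⟩ := snode_inj he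
      refine ⟨fun hcd => ?_, fun _ => ?_⟩
      · rw [← hc] at hcd; cases hcd
      · rw [← h2]; exact hg

lemma payoffRel_d {p : Agent} {sd sr : StratProf} {f : Payoffs}
    (h : PayoffRel (snode p Choice.d sd sr) f) : PayoffRel sd f :=
  (payoffRel_node h p Choice.d sd sr rfl).1 rfl

lemma payoffRel_r {p : Agent} {sd sr : StratProf} {f : Payoffs}
    (h : PayoffRel (snode p Choice.r sd sr) f) : PayoffRel sr f :=
  (payoffRel_node h p Choice.r sd sr rfl).2 rfl

lemma payoffRel_leaf_aux {s : StratProf} {f : Payoffs} (h : PayoffRel s f) :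
    ∀ g, s = sleaf g → f = g := by
  cases h with
  | leaf => intro g he; exact sleaf_inj he
  | down p sd sr f' hg => intro g he; exact absurd he.symm (sleaf_ne_snode g p Choice.d sd sr)
  | right p sd sr f' hg => intro g he; exact absurd he.symm (sleaf_ne_snode g p Choice.r sd sr)

lemma payoffRel_leaf_inv {g f : Payoffs} (h : PayoffRel (sleaf g) f) : f = g :=
  payoffRel_leaf_aux h g rfl

lemma payoffRel_det {s : StratProf} {f : Payoffs} (h : PayoffRel s f) :
    ∀ f', PayoffRel s f' → f = f' := by
  induction h with
  | leaf g => intro f' h'; exact (payoffRel_leaf_inv h').symm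
  | down p sd sr g _ ih => intro f' h'; exact ih f' (payoffRel_d h')
  | right p sd sr g _ ih => intro f' h'; exact ih f' (payoffRel_r h')

lemma bisim_dest {s s' : StratProf} (h : Bisim s s') :
    (∃ f, s = sleaf f ∧ s' = sleaf f) ∨
      ∃ p c sd sr sd' sr', s = snode p c sd sr ∧ s' = snode p c sd' sr' ∧
        Bisim sd sd' ∧ Bisim sr sr' := by
  obtain ⟨R, hR, hstep⟩ := h
  rcases hstep _ _ hR with ⟨f, h1, h2⟩ | ⟨p, c, td, tr, td', tr', h1, h2, hd, hr⟩
  · exact Or.inl ⟨f, h1, h2⟩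
  · exact Or.inr ⟨p, c, td, tr, td', tr', h1, h2, ⟨R, hd, hstep⟩, ⟨R, hr, hstep⟩⟩

lemma payoffRel_bisim {s : StratProf} {f : Payoffs} (h : PayoffRel s f) :
    ∀ s', Bisim s s' → PayoffRel s' f := by
  induction h with
  | leaf g =>
      intro s' hb
      rcases bisim_dest hb with ⟨f', h1, h2⟩ | ⟨p, c, sd, sr, sd', sr', h1, _, _, _⟩
      · rw [h2, ← sleaf_inj h1]; exact PayoffRel.leaf g
      · exact absurd h1 (sleaf_ne_snode g p c sd sr)
  | down p sd sr g hg ih =>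
      intro s' hb
      rcases bisim_dest hb with ⟨f', h1, _⟩ | ⟨p', c', td, tr, td', tr', h1, h2, hbd, hbr⟩
      · exact absurd h1.symm (sleaf_ne_snode f' p Choice.d sd sr)
      · obtain ⟨hp, hc, hd, hr⟩ := snode_inj h1
        rw [h2, ← hc]
        rw [← hd] at hbd
        exact PayoffRel.down p' td' tr' g (ih td' hbd)
  | right p sd sr g hg ih =>
      intro s' hb
      rcases bisim_dest hb with ⟨f', h1, _⟩ | ⟨p', c', td, tr, td', tr', h1, h2, hbd, hbr⟩
      · exact absurd h1.symm (sleaf_ne_snode f' p Choice.r sd sr)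
      · obtain ⟨hp, hc, hd, hr⟩ := snode_inj h1
        rw [h2, ← hc]
        rw [← hr] at hbr
        exact PayoffRel.right p' td' tr' g (ih tr' hbr)

lemma spe_pe {s : StratProf} (h : SPE s) : PE s := by
  obtain ⟨R, hR, hstep⟩ := h
  exact (hstep _ hR).1

lemma spe_children {p : Agent} {c : Choice} {sd sr : StratProf}
    (h : SPE (snode p c sd sr)) : SPE sd ∧ SPE sr := by
  obtain ⟨R, hR, hstep⟩ := h
  obtain ⟨hd, hr⟩ := (hstep _ hR).2 p c sd sr rfl
  exact ⟨⟨R, hd, hstep⟩, ⟨R, hr, hstep⟩⟩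

lemma conv_of_sconv {s : StratProf} (h : SConv s) : Conv s := by
  obtain ⟨R, hR, hstep⟩ := h
  rcases hstep _ hR with ⟨f, rfl⟩ | ⟨p, c, sd, sr, _, hc, _, _⟩
  · exact Conv.leaf f
  · exact hc

lemma payoff_of_conv {s : StratProf} (h : Conv s) : ∃ f, PayoffRel s f := by
  induction h with
  | leaf f => exact ⟨f, PayoffRel.leaf f⟩
  | down p sd sr _ ih => obtain ⟨f, hf⟩ := ih; exact ⟨f, PayoffRel.down p sd sr f hf⟩
  | right p sd sr _ ih => obtain ⟨f, hf⟩ := ih; exact ⟨f, PayoffRel.right p sd sr f hf⟩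

lemma payoff_of_spe {s : StratProf} (h : SPE s) : ∃ f, PayoffRel s f :=
  payoff_of_conv (conv_of_sconv (spe_pe h).1)

lemma convert_ineq {p : Agent} {s s' : StratProf} (h : Convert p s s') :
    SPE s → ∀ f f', PayoffRel s f → PayoffRel s' f' → f p ≥ f' p := by
  induction h with
  | @bisim s s' hb =>
      intro _ f f' hf hf'
      have hf2 : PayoffRel s' f := payoffRel_bisim hf s' hb
      rw [payoffRel_det hf2 f' hf']
  | @own c c' s1 s2 s1' s2' h1 h2 ih1 ih2 =>
      intro hs f f' hf hf'
      have hpe := spe_pe hs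
      obtain ⟨hspe1, hspe2⟩ := spe_children hs
      cases c with
      | d =>
          have hf1 : PayoffRel s1 f := payoffRel_d hf
          cases c' with
          | d => exact ih1 hspe1 f f' hf1 (payoffRel_d hf')
          | r =>
              have hf2' : PayoffRel s2' f' := payoffRel_r hf'
              obtain ⟨f2, hf2⟩ := payoff_of_spe hspe2
              have h12 : f p ≥ f2 p := hpe.2.1 p s1 s2 f f2 rfl hf1 hf2
              exact le_trans (ih2 hspe2 f2 f' hf2 hf2') h12
      | r =>
          have hf1 : PayoffRel s2 f := payoffRel_r hf
          cases c' with
          | r => exact ih2 hspe2 f f' hf1 (payoffRel_r hf')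
          | d =>
              have hf1' : PayoffRel s1' f' := payoffRel_d hf'
              obtain ⟨f1, hf1d⟩ := payoff_of_spe hspe1
              have h12 : f p ≥ f1 p := hpe.2.2 p s1 s2 f1 f rfl hf1d hf1
              exact le_trans (ih1 hspe1 f1 f' hf1d hf1') h12
  | @other p' c s1 s2 s1' s2' h1 h2 ih1 ih2 =>
      intro hs f f' hf hf'
      obtain ⟨hspe1, hspe2⟩ := spe_children hs
      cases c with
      | d => exact ih1 hspe1 f f' (payoffRel_d hf) (payoffRel_d hf')
      | r => exact ih2 hspe2 f f' (payoffRel_r hf) (payoffRel_r hf')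

/-- every subgame perfect equilibrium is a Nash equilibrium. -/
theorem nash_of_spe : ∀ s : StratProf, SPE s → Nash s := by
  intro s hs p s' f f' hconv hf hf'
  exact convert_ineq hconv hs f f' hf hf'
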